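/- Let X be a Hausdorff topological space and λ a regular content on X. Then λ is a valuation on the lattice of compact subsets: for all compact sets C₁, C₂, λ(C₁) + λ(C₂) = λ(C₁ ∪ C₂) + λ(C₁ ∩ C₂). -/

import Mathlib

open scoped NNReal

/-- `K ≪ K'` : there is an open set between `K` and `K'`. -/
def WayBelowCompact {X : Type*} [TopologicalSpace X] (K K' : Set X) : Prop :=
  ∃ U : Set X, IsOpen U ∧ K ⊆ U ∧ U ⊆ K'

theorem regular_content_is_valuation
    (X : Type*) [TopologicalSpace X] [T2Space X]
    (l : Set X → ℝ≥0)
    (hmono : ∀ C D : Set X, IsCompact C → IsCompact D → C ⊆ D → l C ≤ l D)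
    (hsub : ∀ C D : Set X, IsCompact C → IsCompact D → l (C ∪ D) ≤ l C + l D)
    (hadd : ∀ C D : Set X, IsCompact C → IsCompact D → C ∩ D = ∅ →
      l (C ∪ D) = l C + l D)
    (hreg : ∀ K : Set X, IsCompact K →
      l K = sInf {r : ℝ≥0 | ∃ K' : Set X, IsCompact K' ∧
        WayBelowCompact K K' ∧ r = l K'}) :
    ∀ C₁ C₂ : Set X, IsCompact C₁ → IsCompact C₂ →
      l C₁ + l C₂ = l (C₁ ∪ C₂) + l (C₁ ∩ C₂) := by
  intro C D hC hD
  have hCD : IsCompact (C ∩ D) := hC.inter hD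
  have hCuD : IsCompact (C ∪ D) := hC.union hD
  set S : Set ℝ≥0 := {r : ℝ≥0 | ∃ K' : Set X, IsCompact K' ∧
      WayBelowCompact (C ∩ D) K' ∧ r = l K'} with hSdef
  by_cases hne : S.Nonempty
  · -- main case: use regularity at C ∩ D
    have key : ∀ r ∈ S,
        (l C + l D ≤ l (C ∪ D) + r) ∧
        (l (C ∪ D) + l (C ∩ D) + l (C ∩ D) ≤ l C + l D + r) := by
      rintro r ⟨E, hE, ⟨U, hU, hCDU, hUE⟩, rfl⟩
      have hA : IsCompact (C \ U) := hC.diff hU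
      have hB : IsCompact (D \ U) := hD.diff hU
      -- C \ U disjoint from D
      have hAD : (C \ U) ∩ D = ∅ := by
        ext x
        simp only [Set.mem_inter_iff, Set.mem_diff, Set.mem_empty_iff_false, iff_false]
        rintro ⟨⟨hxC, hxU⟩, hxD⟩
        exact hxU (hCDU ⟨hxC, hxD⟩)
      -- C \ U disjoint from C ∩ D
      have hACD : (C \ U) ∩ (C ∩ D) = ∅ := by
        ext x
        simp only [Set.mem_inter_iff, Set.mem_diff, Set.mem_empty_iff_false, iff_false]
        rintro ⟨⟨hxC, hxU⟩, hxCD⟩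
        exact hxU (hCDU hxCD)
      -- D \ U disjoint from C ∩ D
      have hBCD : (D \ U) ∩ (C ∩ D) = ∅ := by
        ext x
        simp only [Set.mem_inter_iff, Set.mem_diff, Set.mem_empty_iff_false, iff_false]
        rintro ⟨⟨hxD, hxU⟩, hxCD⟩
        exact hxU (hCDU hxCD)
      -- C \ U disjoint from D \ U
      have hAB : (C \ U) ∩ (D \ U) = ∅ := by
        ext x
        simp only [Set.mem_inter_iff, Set.mem_diff, Set.mem_empty_iff_false, iff_false]
        rintro ⟨⟨hxC, hxU⟩, hxD, _⟩
        exact hxU (hCDU ⟨hxC, hxD⟩)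
      constructor
      · -- l C + l D ≤ l (C ∪ D) + l E
        have h1 : l C ≤ l (C \ U) + l E := by
          calc l C ≤ l ((C \ U) ∪ E) := by
                refine hmono _ _ hC (hA.union hE) ?_
                intro x hx
                by_cases hxU : x ∈ U
                · exact Or.inr (hUE hxU)
                · exact Or.inl ⟨hx, hxU⟩
            _ ≤ l (C \ U) + l E := hsub _ _ hA hE
        have h2 : l (C \ U) + l D = l ((C \ U) ∪ D) := (hadd _ _ hA hD hAD).symm
        have h3 : l ((C \ U) ∪ D) ≤ l (C ∪ D) :=
          hmono _ _ (hA.union hD) hCuD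
            (Set.union_subset_union_left D Set.diff_subset)
        calc l C + l D ≤ (l (C \ U) + l E) + l D := add_le_add_left h1 _
          _ = (l (C \ U) + l D) + l E := by ring
          _ = l ((C \ U) ∪ D) + l E := by rw [h2]
          _ ≤ l (C ∪ D) + l E := add_le_add_left h3 _
      · -- l (C ∪ D) + 2 l (C ∩ D) ≤ l C + l D + l E
        have h1 : l (C ∪ D) ≤ l (C \ U) + l (D \ U) + l E := by
          calc l (C ∪ D) ≤ l (((C \ U) ∪ (D \ U)) ∪ E) := by
                refine hmono _ _ hCuD ((hA.union hB).union hE) ?_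
                intro x hx
                by_cases hxU : x ∈ U
                · exact Or.inr (hUE hxU)
                · rcases hx with hx | hx
                  · exact Or.inl (Or.inl ⟨hx, hxU⟩)
                  · exact Or.inl (Or.inr ⟨hx, hxU⟩)
            _ ≤ l ((C \ U) ∪ (D \ U)) + l E := hsub _ _ (hA.union hB) hE
            _ = l (C \ U) + l (D \ U) + l E := by
                rw [hadd _ _ hA hB hAB]
        have h2 : l (C \ U) + l (C ∩ D) ≤ l C := by
          rw [← hadd _ _ hA hCD hACD]
          refine hmono _ _ (hA.union hCD) hC ?_
          exact Set.union_subset Set.diff_subset Set.inter_subset_left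
        have h3 : l (D \ U) + l (C ∩ D) ≤ l D := by
          rw [← hadd _ _ hB hCD hBCD]
          refine hmono _ _ (hB.union hCD) hD ?_
          exact Set.union_subset Set.diff_subset Set.inter_subset_right
        calc l (C ∪ D) + l (C ∩ D) + l (C ∩ D)
            ≤ (l (C \ U) + l (D \ U) + l E) + l (C ∩ D) + l (C ∩ D) := by
              exact add_le_add_left (add_le_add_left h1 _) _
          _ = (l (C \ U) + l (C ∩ D)) + (l (D \ U) + l (C ∩ D)) + l E := by ring
          _ ≤ l C + l D + l E := by
              exact add_le_add_left (add_le_add h2 h3) _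
    have hinf : l (C ∩ D) = sInf S := hreg _ hCD
    have h1 : l C + l D ≤ l (C ∪ D) + sInf S :=
      tsub_le_iff_left.1 (le_csInf hne fun r hr => tsub_le_iff_left.2 (key r hr).1)
    have h2 : l (C ∪ D) + l (C ∩ D) + l (C ∩ D) ≤ l C + l D + sInf S :=
      tsub_le_iff_left.1 (le_csInf hne fun r hr => tsub_le_iff_left.2 (key r hr).2)
    rw [← hinf] at h1 h2
    refine le_antisymm h1 ?_
    exact (add_le_add_iff_right (l (C ∩ D))).1 h2
  · -- degenerate case: no compact neighborhood of C ∩ D exists, all values are 0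
    have hempty : S = ∅ := Set.not_nonempty_iff_eq_empty.1 hne
    have hzero : ∀ K : Set X, IsCompact K → C ∩ D ⊆ K → l K = 0 := by
      intro K hK hsub'
      have : {r : ℝ≥0 | ∃ K' : Set X, IsCompact K' ∧
          WayBelowCompact K K' ∧ r = l K'} = ∅ := by
        rw [Set.eq_empty_iff_forall_notMem]
        rintro r ⟨K', hK', ⟨U, hU, hKU, hUK'⟩, rfl⟩
        have : l K' ∈ S := ⟨K', hK', ⟨U, hU, hsub'.trans hKU, hUK'⟩, rfl⟩
        rw [hempty] at this
        exact this
      rw [hreg K hK, this, NNReal.sInf_empty]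
    rw [hzero C hC Set.inter_subset_left, hzero D hD Set.inter_subset_right,
      hzero (C ∪ D) hCuD (Set.inter_subset_left.trans Set.subset_union_left),
      hzero (C ∩ D) hCD subset_rfl]
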